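/- For every natural number n and every element w of the free group F_n, the following equality holds in the braid group B_{n+2}: ς_{n+1}(φ(w)) = σ_1^{-1} · sh(ς_n(w)) · σ_1, where φ : F_n → F_{n+1} is the group homomorphism determined by φ(g_i) = g_{i+1} for 1 ≤ i ≤ n, and sh : B_{n+1} → B_{n+2} is the shift homomorphism. Equivalently, σ_1^{-1} · sh(ς_n(w)) = ς_{n+1}(φ(w)) · σ_1^{-1} in B_{n+2}; this expresses that the family of morphisms {ς_n} satisfies Condition 2.2 of the paper (via its reformulation in Lemma 2.4, where the braiding b_{1,1} of the braid groupoid is the generator σ_1). -/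

import Mathlib

open FreeGroup

/-- The braid relations on `m` Artin generators (indexed by `Fin m`, where index `k`
stands for the classical generator `σ_{k+1}`):
`σ_i σ_j σ_i = σ_j σ_i σ_j` when `|i - j| = 1` and `σ_i σ_j = σ_j σ_i` when `|i - j| ≥ 2`. -/
def braidRels (m : ℕ) : Set (FreeGroup (Fin m)) :=
  {r | (∃ i j : Fin m, (i : ℕ) + 1 = (j : ℕ) ∧
          r = of i * of j * of i * (of j * of i * of j)⁻¹) ∨
       (∃ i j : Fin m, (i : ℕ) + 2 ≤ (j : ℕ) ∧
          r = of i * of j * (of j * of i)⁻¹)}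

/-- `Braid m` is the braid group `B_{m+1}` on `m + 1` strands, presented with `m` Artin
generators `σ_1, …, σ_m` (index `k : Fin m` corresponds to `σ_{k+1}`). -/
abbrev Braid (m : ℕ) := PresentedGroup (braidRels m)

/-- `sig m k` is the Artin generator `σ_{k+1}` of the braid group `B_{m+1}` when `k < m`
(and junk value `1` otherwise). -/
def sig (m : ℕ) (k : ℕ) : Braid m :=
  if h : k < m then PresentedGroup.of (⟨k, h⟩ : Fin m) else 1

/-- `pword m j` is the product `σ_j σ_{j-1} ⋯ σ_1` in `B_{m+1}` (classical notation),
i.e. `sig m (j-1) * ⋯ * sig m 0`. -/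
def pword (m j : ℕ) : Braid m := ((List.range j).reverse.map (sig m)).prod

/-- The image of the free generator `g_{j+1}` of `F_n` under `ς_n : F_n → B_{n+1}`:
`σ_1⁻¹ σ_2⁻¹ ⋯ σ_{i-1}⁻¹ σ_i² σ_{i-1} ⋯ σ_2 σ_1` where `i = j + 1`. -/
def sigmaWord (n : ℕ) (j : Fin n) : Braid n :=
  (pword n j.val)⁻¹ * (sig n j.val) ^ 2 * pword n j.val

/-- The pure braid local system morphism `ς_n : F_n → B_{n+1}`, determined on the free
generators `g_1, …, g_n` of `F_n` (indexed by `Fin n`) by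
`ς_n(g_i) = σ_1⁻¹ σ_2⁻¹ ⋯ σ_{i-1}⁻¹ σ_i² σ_{i-1} ⋯ σ_2 σ_1`. -/
def varsigma (n : ℕ) : FreeGroup (Fin n) →* Braid n :=
  FreeGroup.lift (sigmaWord n)

/-- The homomorphism `φ : F_n → F_{n+1}` with `φ(g_i) = g_{i+1}`. -/
def phiF (n : ℕ) : FreeGroup (Fin n) →* FreeGroup (Fin (n + 1)) :=
  FreeGroup.lift fun j => FreeGroup.of j.succ

/-- For every `w ∈ F_n`, the equality `ς_{n+1}(φ(w)) = σ_1⁻¹ · sh(ς_n(w)) · σ_1` holds in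
`B_{n+2}`, where `sh : B_{n+1} → B_{n+2}` is the shift homomorphism `σ_i ↦ σ_{i+1}`
(Condition 2.2 of the paper, in the formulation of Lemma 2.4, for the pure braid local
system morphisms `ς_n`). -/

lemma pword_succ (m j : ℕ) : pword m (j + 1) = sig m j * pword m j := by
  unfold pword
  rw [List.range_succ]
  simp

lemma sh_sig {n : ℕ} (sh : Braid n →* Braid (n + 1))
    (hsh : ∀ k : Fin n, sh (PresentedGroup.of k) = PresentedGroup.of k.succ)
    (k : ℕ) (hk : k < n) : sh (sig n k) = sig (n + 1) (k + 1) := by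
  simp only [sig, hk, Nat.succ_lt_succ hk, dif_pos, hsh]
  rfl

lemma sh_pword {n : ℕ} (sh : Braid n →* Braid (n + 1))
    (hsh : ∀ k : Fin n, sh (PresentedGroup.of k) = PresentedGroup.of k.succ)
    (j : ℕ) (hj : j ≤ n) :
    sh (pword n j) = pword (n + 1) (j + 1) * (sig (n + 1) 0)⁻¹ := by
  induction j with
  | zero =>
    have : pword n 0 = 1 := rfl
    rw [this, _root_.map_one, pword_succ]
    have : pword (n+1) 0 = 1 := rfl
    rw [this]
    group
  | succ j ih =>
    rw [pword_succ, _root_.map_mul, sh_sig sh hsh j (by omega), ih (by omega),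
      pword_succ (n+1) (j+1)]
    group

theorem varsigma_shift (n : ℕ) (sh : Braid n →* Braid (n + 1))
    (hsh : ∀ k : Fin n, sh (PresentedGroup.of k) = PresentedGroup.of k.succ)
    (w : FreeGroup (Fin n)) :
    varsigma (n + 1) (phiF n w) = (sig (n + 1) 0)⁻¹ * sh (varsigma n w) * sig (n + 1) 0 := by
  induction w using FreeGroup.induction_on with
  | C1 => simp
  | of j =>
    show (varsigma (n+1)) ((phiF n) (FreeGroup.of j)) = _
    have h1 : phiF n (FreeGroup.of j) = FreeGroup.of j.succ := FreeGroup.lift_apply_of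
    rw [h1]
    have h2 : varsigma (n + 1) (FreeGroup.of j.succ) = sigmaWord (n + 1) j.succ :=
      FreeGroup.lift_apply_of
    have h3 : varsigma n (FreeGroup.of j) = sigmaWord n j := FreeGroup.lift_apply_of
    rw [h2, show (varsigma n) (FreeGroup.of j) = sigmaWord n j from h3]
    unfold sigmaWord
    have hjs : (j.succ : Fin (n+1)).val = j.val + 1 := rfl
    rw [hjs, _root_.map_mul, _root_.map_mul, _root_.map_inv, _root_.map_pow,
      sh_pword sh hsh j.val (le_of_lt j.isLt),
      sh_sig sh hsh j.val j.isLt]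
    group
  | inv_of j ih =>
    simp only [_root_.map_inv]
    rw [ih]
    group
  | mul x y ihx ihy =>
    simp only [_root_.map_mul]
    rw [ihx, ihy]
    group
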